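/- Let u ∈ ℝ^p and weights λ_1 ≥ … ≥ λ_p ≥ 0 be such that the sequence (u_1 − λ_1, …, u_p − λ_p) is positive and non-increasing. Then the proximity operator of the ordered ℓ1 norm at u, Prox_{‖·‖_Λ}(u) = argmin_{z ∈ ℝ^p} (1/2)‖u − z‖² + ‖z‖_Λ, equals the solution of the isotonic-type problem argmin_{θ ∈ ℝ^p : θ_1 ≥ θ_2 ≥ … ≥ θ_p ≥ 0} (1/2)‖u − λ − θ‖². -/

import Mathlib

open MeasureTheory ProbabilityTheory Matrix

/-- The non-increasing rearrangement of the amplitudes `(|θ 1|, …, |θ p|)`. -/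
noncomputable def dsort {p : ℕ} (θ : Fin p → ℝ) : Fin p → ℝ :=
  fun j => |θ (Tuple.sort (fun i => |θ i|) j.rev)|

/-- The ordered ℓ1 (Slope) norm `‖θ‖_Λ = ∑ j, λ_j |θ|^↓_j`. -/
noncomputable def slopeNorm {p : ℕ} (lam θ : Fin p → ℝ) : ℝ :=
  ∑ j, lam j * dsort θ j

/-- The dual norm of the Slope norm: `‖v‖* = sup_{‖θ‖_Λ ≤ 1} ⟨v, θ⟩`. -/
noncomputable def dualSlopeNorm {p : ℕ} (lam v : Fin p → ℝ) : ℝ :=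
  sSup {x : ℝ | ∃ θ : Fin p → ℝ, slopeNorm lam θ ≤ 1 ∧ x = ∑ j, v j * θ j}

/-- Euclidean norm of a vector. -/
noncomputable def enorm2 {n : ℕ} (v : Fin n → ℝ) : ℝ :=
  Real.sqrt (∑ i, (v i) ^ 2)

/-- Number of nonzero entries. -/
noncomputable def l0 {p : ℕ} (u : Fin p → ℝ) : ℕ := Set.ncard {j | u j ≠ 0}

/-- `Λ(λ, s) = (∑_{j=1}^s λ_j²)^{1/2}` (with 0-based indexing: `j < s`). -/
noncomputable def LamS {p : ℕ} (lam : Fin p → ℝ) (s : ℕ) : ℝ :=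
  Real.sqrt (∑ j ∈ Finset.univ.filter (fun j : Fin p => (j : ℕ) < s), (lam j) ^ 2)

/-- `∑_{j=1}^s λ_j |u|^↓_j` (0-based: indices `j < s`). -/
noncomputable def headSum {p : ℕ} (lam : Fin p → ℝ) (s : ℕ) (u : Fin p → ℝ) : ℝ :=
  ∑ j ∈ Finset.univ.filter (fun j : Fin p => (j : ℕ) < s), lam j * dsort u j

/-- `∑_{j=s+1}^p λ_j |u|^↓_j` (0-based: indices `s ≤ j`). -/
noncomputable def tailSum {p : ℕ} (lam : Fin p → ℝ) (s : ℕ) (u : Fin p → ℝ) : ℝ :=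
  ∑ j ∈ Finset.univ.filter (fun j : Fin p => s ≤ (j : ℕ)), lam j * dsort u j

/-- An undirected graph on the vertex set `[n]` with `p` (distinct) edges,
each edge recorded as an ordered pair `(min, max)`. -/
structure GraphOn (n p : ℕ) where
  edge : Fin p → Fin n × Fin n
  lt : ∀ e, (edge e).1 < (edge e).2
  inj : Function.Injective edge

/-- The edge-vertex incidence matrix `Dᵀ ∈ ℝ^{p × n}`:
`(Dᵀ)_{e,v} = +1` if `v = min(i,j)`, `-1` if `v = max(i,j)`, `0` otherwise. -/
def GraphOn.incT {n p : ℕ} (G : GraphOn n p) : Matrix (Fin p) (Fin n) ℝ :=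
  Matrix.of fun e v =>
    if v = (G.edge e).1 then 1 else if v = (G.edge e).2 then -1 else 0

/-- The simple graph associated to a `GraphOn`. -/
def GraphOn.toSimpleGraph {n p : ℕ} (G : GraphOn n p) : SimpleGraph (Fin n) :=
  SimpleGraph.fromRel fun i j => ∃ e, G.edge e = (i, j)

/-- The compatibility factor `κ(s)`. -/
noncomputable def kappa {n p : ℕ} (G : GraphOn n p) (lam : Fin p → ℝ) (s : ℕ) : ℝ :=
  sInf ((fun v : Fin n → ℝ => enorm2 v / enorm2 (G.incT.mulVec v)) ''
    {v : Fin n → ℝ |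
      3 * LamS lam s * enorm2 (G.incT.mulVec v) > tailSum lam s (G.incT.mulVec v)})

/-- The four Penrose conditions: `B` is the Moore–Penrose pseudo-inverse of `A`. -/
def IsMoorePenrose {m k : ℕ} (A : Matrix (Fin m) (Fin k) ℝ)
    (B : Matrix (Fin k) (Fin m) ℝ) : Prop :=
  A * B * A = A ∧ B * A * B = B ∧ (A * B)ᵀ = A * B ∧ (B * A)ᵀ = B * A

/-- `ρ(G) = max_j ‖(Dᵀ)† e_j‖₂`, where `B = (Dᵀ)†`. -/
noncomputable def rhoG {n p : ℕ} (B : Matrix (Fin n) (Fin p) ℝ) : ℝ :=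
  ⨆ j : Fin p, enorm2 (fun i => B i j)

/-- `P` is the matrix of the orthogonal (Euclidean) projection onto `ker Dᵀ`:
symmetric, idempotent, range contained in the kernel, fixing the kernel. -/
def IsOrthProjKer {n p : ℕ} (G : GraphOn n p) (P : Matrix (Fin n) (Fin n) ℝ) : Prop :=
  Pᵀ = P ∧ P * P = P ∧ (∀ v : Fin n → ℝ, G.incT.mulVec (P.mulVec v) = 0) ∧
    ∀ v : Fin n → ℝ, G.incT.mulVec v = 0 → P.mulVec v = v

/-- The Graph-Slope objective `β ↦ (1/(2n))‖y - β‖² + ‖Dᵀβ‖_Λ`. -/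
noncomputable def gslopeObj {n p : ℕ} (G : GraphOn n p) (lam : Fin p → ℝ)
    (y β : Fin n → ℝ) : ℝ :=
  (1 / (2 * (n : ℝ))) * (enorm2 (y - β)) ^ 2 + slopeNorm lam (G.incT.mulVec β)

section slopeAux

variable {p : ℕ}

/-- The permutation realizing `dsort`. -/
noncomputable def dsortPerm (θ : Fin p → ℝ) : Equiv.Perm (Fin p) :=
  (Fin.revPerm).trans (Tuple.sort fun i => |θ i|)

lemma dsort_eq_comp (θ : Fin p → ℝ) (j : Fin p) :
    dsort θ j = |θ (dsortPerm θ j)| := rfl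

lemma dsort_antitone (θ : Fin p → ℝ) : Antitone (dsort θ) := by
  intro j k hjk
  have h := Tuple.monotone_sort (fun i => |θ i|) (Fin.rev_le_rev.mpr hjk)
  simpa [dsort, Function.comp] using h

lemma slopeNorm_le_inner (lam w : Fin p → ℝ) (hmono : Antitone lam)
    (hwanti : Antitone w) (hwnn : ∀ j, 0 ≤ w j) :
    slopeNorm lam w ≤ ∑ j, lam j * w j := by
  have h1 : slopeNorm lam w = ∑ j, lam j * w (dsortPerm w j) := by
    unfold slopeNorm
    refine Finset.sum_congr rfl fun j _ => ?_
    rw [dsort_eq_comp, abs_of_nonneg (hwnn _)]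
  rw [h1]
  exact (hmono.monovary hwanti).sum_mul_comp_perm_le_sum_mul (σ := dsortPerm w)

lemma inner_le_slopeNorm (lam z : Fin p → ℝ) (hmono : Antitone lam)
    (hnonneg : ∀ j, 0 ≤ lam j) :
    ∑ j, lam j * z j ≤ slopeNorm lam z := by
  have h1 : ∑ j, lam j * z j ≤ ∑ j, lam j * |z j| :=
    Finset.sum_le_sum fun j _ => mul_le_mul_of_nonneg_left (le_abs_self _) (hnonneg j)
  have h2 : ∀ j, |z j| = dsort z ((dsortPerm z)⁻¹ j) := by
    intro j
    rw [dsort_eq_comp]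
    simp
  have h3 : ∑ j, lam j * |z j| ≤ slopeNorm lam z := by
    unfold slopeNorm
    calc ∑ j, lam j * |z j| = ∑ j, lam j * dsort z ((dsortPerm z)⁻¹ j) := by
          refine Finset.sum_congr rfl fun j _ => by rw [h2]
      _ ≤ ∑ j, lam j * dsort z j :=
          (hmono.monovary (dsort_antitone z)).sum_mul_comp_perm_le_sum_mul
            (σ := (dsortPerm z)⁻¹)
  linarith

lemma enorm2_sq (v : Fin p → ℝ) : enorm2 v ^ 2 = ∑ i, (v i) ^ 2 := by
  rw [enorm2, Real.sq_sqrt (Finset.sum_nonneg fun i _ => sq_nonneg _)]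

end slopeAux

theorem statement_19' {p : ℕ} (lam : Fin p → ℝ)
    (hmono : Antitone lam) (hnonneg : ∀ j, 0 ≤ lam j) (hne : lam ≠ 0)
    (u : Fin p → ℝ)
    (hpos : ∀ j, 0 < u j - lam j) (hdec : Antitone fun j => u j - lam j)
    (z θ : Fin p → ℝ)
    (hz : IsMinOn (fun z' : Fin p → ℝ => (1 / 2) * (enorm2 (u - z')) ^ 2 + slopeNorm lam z')
      Set.univ z)
    (hθmem : θ ∈ {θ' : Fin p → ℝ | Antitone θ' ∧ ∀ j, 0 ≤ θ' j})
    (hθ : IsMinOn (fun θ' : Fin p → ℝ => (1 / 2) * (enorm2 (u - lam - θ')) ^ 2)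
      {θ' : Fin p → ℝ | Antitone θ' ∧ ∀ j, 0 ≤ θ' j} θ) :
    z = θ := by
  classical
  set w : Fin p → ℝ := u - lam with hw
  have hwanti : Antitone w := by
    intro i j hij
    exact hdec hij
  have hwnn : ∀ j, 0 ≤ w j := fun j => (hpos j).le
  have hwmem : w ∈ {θ' : Fin p → ℝ | Antitone θ' ∧ ∀ j, 0 ≤ θ' j} := ⟨hwanti, hwnn⟩
  -- step 1 : θ = w
  have hθw : θ = w := by
    have h := isMinOn_iff.mp hθ w hwmem
    have hsub : u - lam - w = 0 := by simp [hw]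
    rw [hsub] at h
    have h0 : enorm2 (0 : Fin p → ℝ) = 0 := by simp [enorm2]
    rw [h0] at h
    rw [show ((1:ℝ)/2) * (0:ℝ)^2 = 0 by ring] at h
    have hsq : enorm2 (u - lam - θ) ^ 2 = ∑ i, (u i - lam i - θ i) ^ 2 := by
      rw [enorm2_sq]; simp
    rw [hsq] at h
    have hle : ∑ i, (u i - lam i - θ i) ^ 2 ≤ 0 := by linarith
    have heq : ∑ i, (u i - lam i - θ i) ^ 2 = 0 :=
      le_antisymm hle (Finset.sum_nonneg fun i _ => sq_nonneg _)
    funext i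
    have := (Finset.sum_eq_zero_iff_of_nonneg fun i _ => sq_nonneg _).mp heq i
      (Finset.mem_univ i)
    have h2 : u i - lam i - θ i = 0 := by
      have := pow_eq_zero_iff (n := 2) (by norm_num) |>.mp this
      exact this
    have : θ i = u i - lam i := by linarith
    simpa [hw] using this
  -- step 2 : z = w
  have hzw : z = w := by
    have h := isMinOn_iff.mp hz w (Set.mem_univ w)
    have e1 : enorm2 (u - z) ^ 2 = ∑ i, (u i - z i) ^ 2 := by rw [enorm2_sq]; simp
    have e2 : enorm2 (u - w) ^ 2 = ∑ i, (lam i) ^ 2 := by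
      rw [enorm2_sq]
      refine Finset.sum_congr rfl fun i _ => ?_
      simp [hw]
    rw [e1, e2] at h
    have key : ∀ i, (u i - z i) ^ 2
        = (z i - w i) ^ 2 - 2 * (lam i * z i - lam i * w i) + (lam i) ^ 2 := by
      intro i
      have : u i = w i + lam i := by simp [hw]
      rw [this]; ring
    have hsum : ∑ i, (u i - z i) ^ 2
        = ∑ i, (z i - w i) ^ 2 - 2 * ((∑ i, lam i * z i) - ∑ i, lam i * w i)
          + ∑ i, (lam i) ^ 2 := by
      rw [Finset.sum_congr rfl fun i _ => key i]
      rw [Finset.sum_add_distrib, Finset.sum_sub_distrib, ← Finset.mul_sum,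
        Finset.sum_sub_distrib]
    rw [hsum] at h
    have hA : slopeNorm lam w ≤ ∑ j, lam j * w j :=
      slopeNorm_le_inner lam w hmono hwanti hwnn
    have hB : ∑ j, lam j * z j ≤ slopeNorm lam z :=
      inner_le_slopeNorm lam z hmono hnonneg
    have hzero : ∑ i, (z i - w i) ^ 2 ≤ 0 := by linarith
    have heq : ∑ i, (z i - w i) ^ 2 = 0 :=
      le_antisymm hzero (Finset.sum_nonneg fun i _ => sq_nonneg _)
    funext i
    have := (Finset.sum_eq_zero_iff_of_nonneg fun i _ => sq_nonneg _).mp heq i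
      (Finset.mem_univ i)
    have h2 : z i - w i = 0 := pow_eq_zero_iff (n := 2) (by norm_num) |>.mp this
    linarith
  rw [hzw, hθw]

/-- when `u - λ` is positive and non-increasing, the proximity operator
of the Slope norm at `u` coincides with the solution of the isotonic-type problem. -/
theorem statement_19 {p : ℕ} (lam : Fin p → ℝ)
    (hmono : Antitone lam) (hnonneg : ∀ j, 0 ≤ lam j) (hne : lam ≠ 0)
    (u : Fin p → ℝ)
    (hpos : ∀ j, 0 < u j - lam j) (hdec : Antitone fun j => u j - lam j)
    (z θ : Fin p → ℝ)
    (hz : IsMinOn (fun z' : Fin p → ℝ => (1 / 2) * (enorm2 (u - z')) ^ 2 + slopeNorm lam z')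
      Set.univ z)
    (hθmem : θ ∈ {θ' : Fin p → ℝ | Antitone θ' ∧ ∀ j, 0 ≤ θ' j})
    (hθ : IsMinOn (fun θ' : Fin p → ℝ => (1 / 2) * (enorm2 (u - lam - θ')) ^ 2)
      {θ' : Fin p → ℝ | Antitone θ' ∧ ∀ j, 0 ≤ θ' j} θ) :
    z = θ :=
  statement_19' lam hmono hnonneg hne u hpos hdec z θ hz hθmem hθ
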